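/- arXiv:1111.6413 — 2 statements merged into one kernel-verified Lean document; each statement's English description precedes it below -/
import Mathlib

section
/- For I-diagrams of sets X and Y, the canonical map colim_I (X ⊠ Y) → (colim_I X) × (colim_I Y) induced by the universal property is a bijection; that is, the colimit functor colim_I : Set^I → Set is strong symmetric monoidal with respect to Day convolution on the source and cartesian product on the target. -/
open CategoryTheory

/-- Objects of the category `I`: the finite sets `𝐧 = {1,…,n}`, encoded by their size. -/
structure IObj : Type where
  n : ℕ

/-- The category `I` of finite sets and injections. -/
instance : Category IObj where
  Hom a b := Fin a.n ↪ Fin b.n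
  id a := Function.Embedding.refl _
  comp f g := f.trans g
  id_comp _ := rfl
  comp_id _ := rfl
  assoc _ _ _ := rfl

/-- Concatenation of injections. -/
def concatMap {m m' n n' : ℕ} (f : Fin m ↪ Fin m') (g : Fin n ↪ Fin n') :
    Fin (m + n) ↪ Fin (m' + n') where
  toFun x :=
    if h : (x : ℕ) < m then ⟨(f ⟨x, h⟩ : ℕ), by have := (f ⟨x, h⟩).isLt; omega⟩
    else ⟨m' + (g ⟨(x : ℕ) - m, by omega⟩ : ℕ), by have := (g ⟨(x : ℕ) - m, by omega⟩).isLt; omega⟩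
  inj' := by
    intro a b hab
    have hv := congrArg Fin.val hab
    by_cases h1 : (a : ℕ) < m <;> by_cases h2 : (b : ℕ) < m <;>
      simp only [h1, h2, dif_pos, dif_neg, not_false_iff] at hv
    · have h3 : f ⟨(a : ℕ), h1⟩ = f ⟨(b : ℕ), h2⟩ := Fin.ext hv
      have h4 := congrArg Fin.val (f.injective h3)
      exact Fin.ext h4
    · exact absurd hv (by have := (f ⟨(a : ℕ), h1⟩).isLt; omega)
    · exact absurd hv (by have := (f ⟨(b : ℕ), h2⟩).isLt; omega)
    · have hg : (g ⟨(a : ℕ) - m, by omega⟩ : ℕ) = (g ⟨(b : ℕ) - m, by omega⟩ : ℕ) := by omega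
      have h4 := congrArg Fin.val (g.injective (Fin.ext hg))
      simp only at h4
      exact Fin.ext (by omega)

lemma concatMap_val_lt {m m' n n' : ℕ} (f : Fin m ↪ Fin m') (g : Fin n ↪ Fin n')
    (x : Fin (m + n)) (h : (x : ℕ) < m) :
    ((concatMap f g) x : ℕ) = (f ⟨(x : ℕ), h⟩ : ℕ) := by
  show ((if h : (x : ℕ) < m then _ else _ : Fin (m' + n')) : ℕ) = _
  rw [dif_pos h]

lemma concatMap_val_ge {m m' n n' : ℕ} (f : Fin m ↪ Fin m') (g : Fin n ↪ Fin n')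
    (x : Fin (m + n)) (h : ¬ (x : ℕ) < m) :
    ((concatMap f g) x : ℕ) = m' + (g ⟨(x : ℕ) - m, by omega⟩ : ℕ) := by
  show ((if h : (x : ℕ) < m then _ else _ : Fin (m' + n')) : ℕ) = _
  rw [dif_neg h]

/-- View a morphism of `I` as an embedding. -/
abbrev toEmb {a b : IObj} (f : a ⟶ b) : Fin a.n ↪ Fin b.n := f

/-- The concatenation (symmetric monoidal) functor `⊔ : I × I → I`. -/
def concatF : IObj × IObj ⥤ IObj where
  obj p := ⟨p.1.n + p.2.n⟩
  map {p q} f := concatMap f.1 f.2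
  map_id := by
    intro p
    apply Function.Embedding.ext
    intro x
    apply Fin.ext
    have hx : (x : ℕ) < p.1.n + p.2.n := x.isLt
    change ((concatMap (Function.Embedding.refl (Fin p.1.n))
      (Function.Embedding.refl (Fin p.2.n))) x : ℕ) = (x : ℕ)
    by_cases h : (x : ℕ) < p.1.n
    · rw [concatMap_val_lt _ _ _ h]; rfl
    · rw [concatMap_val_ge _ _ _ h]
      have h5 : (Function.Embedding.refl (Fin p.2.n) ⟨(x : ℕ) - p.1.n, by omega⟩ : ℕ)
          = (x : ℕ) - p.1.n := rfl
      omega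
  map_comp := by
    intro p q r f g
    obtain ⟨f1, f2⟩ := f
    obtain ⟨g1, g2⟩ := g
    apply Function.Embedding.ext
    intro x
    apply Fin.ext
    have hx : (x : ℕ) < p.1.n + p.2.n := x.isLt
    change ((concatMap ((toEmb f1).trans (toEmb g1)) ((toEmb f2).trans (toEmb g2))) x : ℕ)
      = ((concatMap (toEmb g1) (toEmb g2)) ((concatMap (toEmb f1) (toEmb f2)) x) : ℕ)
    by_cases h : (x : ℕ) < p.1.n
    · rw [concatMap_val_lt _ _ _ h]
      have hy := concatMap_val_lt (toEmb f1) (toEmb f2) x h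
      have hcond : ((concatMap (toEmb f1) (toEmb f2)) x : ℕ) < q.1.n := by
        rw [hy]; exact ((toEmb f1) ⟨(x : ℕ), h⟩).isLt
      rw [concatMap_val_lt (toEmb g1) (toEmb g2) _ hcond]
      have harg : (⟨((concatMap (toEmb f1) (toEmb f2)) x : ℕ), hcond⟩ : Fin q.1.n)
          = (toEmb f1) ⟨(x : ℕ), h⟩ := Fin.ext hy
      exact (congrArg (fun z : Fin q.1.n => ((toEmb g1) z : ℕ)) harg).symm
    · rw [concatMap_val_ge _ _ _ h]
      have hy := concatMap_val_ge (toEmb f1) (toEmb f2) x h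
      have hcond : ¬ ((concatMap (toEmb f1) (toEmb f2)) x : ℕ) < q.1.n := by omega
      rw [concatMap_val_ge (toEmb g1) (toEmb g2) _ hcond]
      have harg : (⟨((concatMap (toEmb f1) (toEmb f2)) x : ℕ) - q.1.n, by omega⟩ : Fin q.2.n)
          = (toEmb f2) ⟨(x : ℕ) - p.1.n, by omega⟩ := Fin.ext (by
            show ((concatMap (toEmb f1) (toEmb f2)) x : ℕ) - q.1.n
              = ((toEmb f2) ⟨(x : ℕ) - p.1.n, by omega⟩ : ℕ)
            omega)
      exact (congrArg (fun z : Fin q.2.n => r.1.n + ((toEmb g2) z : ℕ)) harg).symm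

/-- The external product of two `I`-diagrams of sets. -/
@[simps]
def extProd (X Y : IObj ⥤ Type) : IObj × IObj ⥤ Type where
  obj p := X.obj p.1 × Y.obj p.2
  map f := TypeCat.ofHom fun a => (X.map f.1 a.1, Y.map f.2 a.2)
  map_id := by intro p; apply ConcreteCategory.hom_ext; intro a; simp
  map_comp := by intro p q r f g; apply ConcreteCategory.hom_ext; intro a; simp

/-- Day convolution `X ⊠ Y` of `I`-diagrams of sets: the left Kan extension of the
external product along concatenation. -/
noncomputable def dayConv (X Y : IObj ⥤ Type) : IObj ⥤ Type :=
  (Functor.lan concatF).obj (extProd X Y)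

open Limits

/-- The cocone on `X ⊠ Y` with point `colim X × colim Y`, obtained via the universal
property of the left Kan extension from the canonical maps
`X(𝐦) × Y(𝐧) → colim X × colim Y`. -/
noncomputable def prodCocone (X Y : IObj ⥤ Type) : Cocone (dayConv X Y) where
  pt := colimit X × colimit Y
  ι := ((concatF.lanAdjunction Type).homEquiv (extProd X Y)
      ((Functor.const IObj).obj (colimit X × colimit Y))).symm
    { app := fun p => TypeCat.ofHom fun z => (colimit.ι X p.1 z.1, colimit.ι Y p.2 z.2)
      naturality := by
        intro p q f
        apply ConcreteCategory.hom_ext; intro z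
        show (colimit.ι X q.1 (X.map f.1 z.1), colimit.ι Y q.2 (Y.map f.2 z.2)) = _
        have hx := ConcreteCategory.congr_hom (colimit.w X f.1) z.1
        have hy := ConcreteCategory.congr_hom (colimit.w Y f.2) z.2
        simp only [types_comp_apply] at hx hy
        rw [hx, hy]
        rfl }

section Aux

variable (X Y : IObj ⥤ Type)

/-- The unit of the left Kan extension adjunction, specialized to `extProd X Y`. -/
noncomputable def dayUnit : extProd X Y ⟶ concatF ⋙ dayConv X Y :=
  concatF.lanUnit.app (extProd X Y)

lemma dayUnit_natural {p q : IObj × IObj} (f : p ⟶ q) (z : (extProd X Y).obj p) :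
    (dayUnit X Y).app q ((extProd X Y).map f z)
      = (dayConv X Y).map (concatF.map f) ((dayUnit X Y).app p z) :=
  ConcreteCategory.congr_hom ((dayUnit X Y).naturality f) z

/-- Computation of the canonical map on elements coming from the unit. -/
lemma desc_ι_dayUnit (p : IObj × IObj) (z : (extProd X Y).obj p) :
    colimit.desc (dayConv X Y) (prodCocone X Y)
      (colimit.ι (dayConv X Y) (concatF.obj p) ((dayUnit X Y).app p z))
      = (colimit.ι X p.1 z.1, colimit.ι Y p.2 z.2) := by
  have h2 := ConcreteCategory.congr_hom (colimit.ι_desc (prodCocone X Y) (concatF.obj p))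
    ((dayUnit X Y).app p z)
  simp only [types_comp_apply] at h2
  rw [h2]
  set A := concatF.lanAdjunction Type
  set s : extProd X Y ⟶ concatF ⋙ (Functor.const IObj).obj (colimit X × colimit Y) :=
    { app := fun p => TypeCat.ofHom fun z => (colimit.ι X p.1 z.1, colimit.ι Y p.2 z.2)
      naturality := by
        intro p q f
        apply ConcreteCategory.hom_ext; intro z
        show (colimit.ι X q.1 (X.map f.1 z.1), colimit.ι Y q.2 (Y.map f.2 z.2)) = _
        have hx := ConcreteCategory.congr_hom (colimit.w X f.1) z.1
        have hy := ConcreteCategory.congr_hom (colimit.w Y f.2) z.2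
        simp only [types_comp_apply] at hx hy
        rw [hx, hy]
        rfl } with hs
  have hps : (prodCocone X Y).ι
      = (A.homEquiv (extProd X Y) ((Functor.const IObj).obj (colimit X × colimit Y))).symm s :=
    rfl
  have key := (A.homEquiv (extProd X Y)
    ((Functor.const IObj).obj (colimit X × colimit Y))).apply_symm_apply s
  rw [Adjunction.homEquiv_unit] at key
  have key2 := ConcreteCategory.congr_hom (NatTrans.congr_app key p) z
  have hunit : A.unit = concatF.lanUnit := Functor.lanAdjunction_unit concatF (Type)
  rw [hps]
  refine Eq.trans ?_ key2
  simp only [hunit]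
  rfl

/-- Every element of `colim (X ⊠ Y)` is represented by an element in the image of
the unit of the Kan extension. -/
lemma exists_dayUnit_rep (c : colimit (dayConv X Y)) :
    ∃ (p : IObj × IObj) (z : (extProd X Y).obj p),
      colimit.ι (dayConv X Y) (concatF.obj p) ((dayUnit X Y).app p z) = c := by
  obtain ⟨k, w, rfl⟩ := Types.jointly_surjective' c
  have hinst : (dayConv X Y).IsLeftKanExtension (dayUnit X Y) :=
    inferInstanceAs ((concatF.lan.obj (extProd X Y)).IsLeftKanExtension
      (concatF.lanUnit.app (extProd X Y)))
  letI := hinst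
  have hpt : (Functor.LeftExtension.mk (dayConv X Y) (dayUnit X Y)).IsPointwiseLeftKanExtension :=
    Functor.isPointwiseLeftKanExtensionOfIsLeftKanExtension (dayConv X Y) (dayUnit X Y)
  obtain ⟨j, z, hz⟩ := Types.jointly_surjective _ (hpt k) w
  refine ⟨(j.left.1, j.left.2), z, ?_⟩
  have hw : w = (dayConv X Y).map j.hom ((dayUnit X Y).app j.left z) := hz.symm
  have hcw := ConcreteCategory.congr_hom (colimit.w (dayConv X Y) j.hom) ((dayUnit X Y).app j.left z)
  simp only [types_comp_apply] at hcw
  rw [hw]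
  exact hcw.symm

/-- The inner cocone used in the construction of the inverse map. -/
noncomputable def innerCocone (m : IObj) (x : X.obj m) : Cocone Y where
  pt := colimit (dayConv X Y)
  ι :=
    { app := fun n => TypeCat.ofHom fun y => colimit.ι (dayConv X Y) (concatF.obj (m, n))
        ((dayUnit X Y).app (m, n) (x, y))
      naturality := by
        intro n n' f
        apply ConcreteCategory.hom_ext; intro y
        show colimit.ι (dayConv X Y) (concatF.obj (m, n'))
            ((dayUnit X Y).app (m, n') (x, Y.map f y))
          = colimit.ι (dayConv X Y) (concatF.obj (m, n)) ((dayUnit X Y).app (m, n) (x, y))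
        have h1 : ((extProd X Y).map ((𝟙 m, f) : (m, n) ⟶ (m, n')) (x, y))
            = (x, Y.map f y) := by
          show (X.map (𝟙 m) x, Y.map f y) = (x, Y.map f y)
          rw [X.map_id]
          rfl
        rw [← h1, dayUnit_natural X Y ((𝟙 m, f) : (m, n) ⟶ (m, n')) (x, y)]
        have hcw := ConcreteCategory.congr_hom (colimit.w (dayConv X Y) (concatF.map ((𝟙 m, f) : (m, n) ⟶ (m, n'))))
          ((dayUnit X Y).app (m, n) (x, y))
        simpa using hcw }

/-- The outer cocone used in the construction of the inverse map. -/
noncomputable def outerCocone : Cocone X where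
  pt := colimit Y → colimit (dayConv X Y)
  ι :=
    { app := fun m => TypeCat.ofHom fun x => ⇑(colimit.desc Y (innerCocone X Y m x))
      naturality := by
        intro m m' f
        apply ConcreteCategory.hom_ext; intro x
        show ⇑(colimit.desc Y (innerCocone X Y m' (X.map f x)))
          = ⇑(colimit.desc Y (innerCocone X Y m x))
        refine congrArg (fun g : colimit Y ⟶ colimit (dayConv X Y) => (g : colimit Y → colimit (dayConv X Y))) ?_
        apply colimit.hom_ext
        intro n
        rw [colimit.ι_desc]
        erw [colimit.ι_desc]
        apply ConcreteCategory.hom_ext; intro y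
        show colimit.ι (dayConv X Y) (concatF.obj (m', n))
            ((dayUnit X Y).app (m', n) (X.map f x, y))
          = colimit.ι (dayConv X Y) (concatF.obj (m, n)) ((dayUnit X Y).app (m, n) (x, y))
        have h1 : ((extProd X Y).map ((f, 𝟙 n) : (m, n) ⟶ (m', n)) (x, y))
            = (X.map f x, y) := by
          show (X.map f x, Y.map (𝟙 n) y) = (X.map f x, y)
          rw [Y.map_id]
          rfl
        rw [← h1, dayUnit_natural X Y ((f, 𝟙 n) : (m, n) ⟶ (m', n)) (x, y)]
        have hcw := ConcreteCategory.congr_hom (colimit.w (dayConv X Y) (concatF.map ((f, 𝟙 n) : (m, n) ⟶ (m', n))))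
          ((dayUnit X Y).app (m, n) (x, y))
        simpa using hcw }

/-- The candidate inverse map. -/
noncomputable def invMap : colimit X × colimit Y → colimit (dayConv X Y) :=
  fun c => colimit.desc X (outerCocone X Y) c.1 c.2

lemma invMap_ι (m n : IObj) (x : X.obj m) (y : Y.obj n) :
    invMap X Y (colimit.ι X m x, colimit.ι Y n y)
      = colimit.ι (dayConv X Y) (concatF.obj (m, n)) ((dayUnit X Y).app (m, n) (x, y)) := by
  have h1 := ConcreteCategory.congr_hom (colimit.ι_desc (outerCocone X Y) m) x
  simp only [types_comp_apply] at h1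
  show colimit.desc X (outerCocone X Y) (colimit.ι X m x) (colimit.ι Y n y) = _
  rw [h1]
  show colimit.desc Y (innerCocone X Y m x) (colimit.ι Y n y) = _
  have h2 := ConcreteCategory.congr_hom (colimit.ι_desc (innerCocone X Y m x) n) y
  simp only [types_comp_apply] at h2
  rw [h2]
  rfl

end Aux

/-- the canonical map `colim_I (X ⊠ Y) → (colim_I X) × (colim_I Y)` induced
by the universal property is a bijection, i.e. the colimit functor is strong symmetric
monoidal with respect to Day convolution and the cartesian product. -/
theorem colimit_dayConv_bijective (X Y : IObj ⥤ Type) :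
    Function.Bijective (colimit.desc (dayConv X Y) (prodCocone X Y)) := by
  rw [Function.bijective_iff_has_inverse]
  refine ⟨invMap X Y, ?_, ?_⟩
  · intro c
    obtain ⟨p, z, rfl⟩ := exists_dayUnit_rep X Y c
    rw [desc_ι_dayUnit]
    exact invMap_ι X Y p.1 p.2 z.1 z.2
  · rintro ⟨cx, cy⟩
    obtain ⟨m, x, rfl⟩ := Types.jointly_surjective' cx
    obtain ⟨n, y, rfl⟩ := Types.jointly_surjective' cy
    rw [invMap_ι]
    exact desc_ι_dayUnit X Y (m, n) (x, y)
end

section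
/- There exists a pullback square in the category of commutative monoids that is not preserved by group completion. Concretely: with M = ℕ ∪ {0'} as above, the square with top-left {0,0'} (a two-element subgroup of M with 0'+0'=0), top-right the trivial monoid {0}, bottom-left M, bottom-right ℤ (the group completion of M), with the evident maps, is a pullback of commutative monoids; but applying group completion yields the square ℤ/2 → 0 → ℤ which is not a pullback, because ℤ/2 → ℤ is not injective while the pullback of 0 → ℤ ← ℤ is trivial. -/
/-- The commutative monoid `M = ℕ ∪ {0'}`: `Option.some n` is the element `n ∈ ℕ` and
`Option.none` is the extra element `0'`. -/
def M7 : Type := Option ℕ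

/-- Addition on `M7`, extending that of `ℕ` by `0' + 0' = 0`, `0 + 0' = 0'`,
and `0' + n = n` for `n ≥ 1`. -/
def M7.add : M7 → M7 → M7
  | Option.none, Option.none => Option.some 0
  | Option.none, Option.some 0 => Option.none
  | Option.some 0, Option.none => Option.none
  | Option.none, Option.some (n + 1) => Option.some (n + 1)
  | Option.some (n + 1), Option.none => Option.some (n + 1)
  | Option.some a, Option.some b => Option.some (a + b)

theorem M7.add_assoc' (a b c : M7) : M7.add (M7.add a b) c = M7.add a (M7.add b c) := by
  rcases a with _ | (_ | a) <;> rcases b with _ | (_ | b) <;> rcases c with _ | (_ | c) <;>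
    simp [M7.add, Nat.succ_eq_add_one] <;> first | rfl | exact congrArg Option.some (by omega)

theorem M7.zero_add' (a : M7) : M7.add (Option.some 0) a = a := by
  rcases a with _ | (_ | a) <;> simp [M7.add, Nat.succ_eq_add_one] <;> first | rfl | exact congrArg Option.some (by omega)

theorem M7.add_zero' (a : M7) : M7.add a (Option.some 0) = a := by
  rcases a with _ | (_ | a) <;> simp [M7.add, Nat.succ_eq_add_one] <;> first | rfl | exact congrArg Option.some (by omega)

theorem M7.add_comm' (a b : M7) : M7.add a b = M7.add b a := by
  rcases a with _ | (_ | a) <;> rcases b with _ | (_ | b) <;> simp [M7.add, Nat.succ_eq_add_one] <;> first | rfl | exact congrArg Option.some (by omega)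

instance : Zero M7 := ⟨Option.some 0⟩
instance : Add M7 := ⟨M7.add⟩

instance : AddCommMonoid M7 where
  add_assoc := M7.add_assoc'
  zero_add := M7.zero_add'
  add_zero := M7.add_zero'
  add_comm := M7.add_comm'
  nsmul := nsmulRec

/-- The extra element `0'` of `M7`. -/
def M7.zero' : M7 := Option.none

/-- The inclusion `ℕ → M7`. -/
def M7.ofN (n : ℕ) : M7 := Option.some n

instance : DecidableEq M7 := inferInstanceAs (DecidableEq (Option ℕ))

/-- The group-completion map `M7 → ℤ`, sending `0'` to `0` and `n` to `n`. -/
def M7.gammaFun : M7 → ℤ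
  | Option.none => 0
  | Option.some n => (n : ℤ)

@[simp] lemma M7.add_def (a b : M7) : a + b = M7.add a b := rfl

/-- The group-completion homomorphism `γ : M7 →+ ℤ`. -/
def M7.gamma : M7 →+ ℤ where
  toFun := M7.gammaFun
  map_zero' := rfl
  map_add' a b := by
    show M7.gammaFun (M7.add a b) = M7.gammaFun a + M7.gammaFun b
    rcases a with _ | (_ | a) <;> rcases b with _ | (_ | b) <;>
      simp [M7.add_def, M7.add, M7.gammaFun] <;> omega

/-- The inclusion of the two-element subgroup `{0, 0'} ≅ ℤ/2` of `M7`. -/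
def M7.e : ZMod 2 →+ M7 where
  toFun := fun x => if x = 0 then M7.ofN 0 else M7.zero'
  map_zero' := by decide
  map_add' := by decide

open CategoryTheory

lemma M7.gamma_eq_zero {a : M7} (h : M7.gamma a = 0) : a = Option.some 0 ∨ a = Option.none := by
  rcases a with _ | n
  · right; rfl
  · left
    have h' : (n : ℤ) = 0 := h
    have : n = 0 := by exact_mod_cast h'
    rw [this]

open Classical in
/-- Lift a hom landing in the kernel of `γ` to `ZMod 2`. -/
noncomputable def M7.lift {A : Type} [AddCommMonoid A] (f : A →+ M7)
    (hf : ∀ x, M7.gamma (f x) = 0) : A →+ ZMod 2 where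
  toFun := fun x => if f x = Option.some 0 then 0 else 1
  map_zero' := by
    have : f 0 = Option.some 0 := map_zero f
    simp [this]; rfl
  map_add' := fun x y => by
    have hxy : f (x + y) = M7.add (f x) (f y) := map_add f x y
    rcases M7.gamma_eq_zero (hf x) with hx | hx <;>
      rcases M7.gamma_eq_zero (hf y) with hy | hy <;>
      rw [hx, hy] at hxy <;> simp [hxy, hx, hy, M7.add] <;> grind

lemma M7.e_lift {A : Type} [AddCommMonoid A] (f : A →+ M7)
    (hf : ∀ x, M7.gamma (f x) = 0) (x : A) : M7.e (M7.lift f hf x) = f x := by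
  rcases M7.gamma_eq_zero (hf x) with h | h <;>
    simp [M7.lift, h, M7.e, M7.ofN, M7.zero'] <;> grind

lemma M7.lift_unique {A : Type} [AddCommMonoid A] (f : A →+ M7)
    (hf : ∀ x, M7.gamma (f x) = 0) (m : A →+ ZMod 2)
    (hm : ∀ x, M7.e (m x) = f x) (x : A) : m x = M7.lift f hf x := by
  have h1 := hm x
  rcases (by decide : ∀ z : ZMod 2, z = 0 ∨ z = 1) (m x) with h | h <;>
      rw [h] at h1 ⊢ <;> simp [M7.e, M7.ofN, M7.zero'] at h1 <;>
      simp [M7.lift, ← h1] <;> grind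

/-- the square with corners `{0,0'} ≅ ℤ/2`, `{0}`, `M = ℕ ∪ {0'}`, `ℤ` is a
pullback of commutative monoids, but applying group completion yields the square
`ℤ/2 → 0`, `ℤ/2 → ℤ`, `0 → ℤ`, `ℤ = ℤ` which is not a pullback of abelian groups
(whatever the induced map `ℤ/2 → ℤ` is): indeed no homomorphism `ℤ/2 → ℤ` is injective,
while the pullback of `0 → ℤ ← ℤ` is trivial. -/
theorem group_completion_does_not_preserve_pullbacks :
    IsPullback (AddCommMonCat.ofHom (0 : ZMod 2 →+ PUnit))
        (AddCommMonCat.ofHom M7.e)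
        (AddCommMonCat.ofHom (0 : PUnit →+ ℤ))
        (AddCommMonCat.ofHom M7.gamma) ∧
      (∀ g : ZMod 2 →+ ℤ, ¬ Function.Injective g) ∧
      ∀ g : AddCommGrpCat.of (ZMod 2) ⟶ AddCommGrpCat.of ℤ,
        ¬ IsPullback (AddCommGrpCat.ofHom (0 : ZMod 2 →+ PUnit)) g
            (AddCommGrpCat.ofHom (0 : PUnit →+ ℤ)) (𝟙 (AddCommGrpCat.of ℤ)) := by
  refine ⟨?_, ?_, ?_⟩
  · have w : CommSq (AddCommMonCat.ofHom (0 : ZMod 2 →+ PUnit))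
        (AddCommMonCat.ofHom M7.e)
        (AddCommMonCat.ofHom (0 : PUnit →+ ℤ))
        (AddCommMonCat.ofHom M7.gamma) := by
      constructor
      ext x
      have : ∀ y : ZMod 2, (0 : ℤ) = M7.gamma (M7.e y) := by decide
      exact this x
    apply IsPullback.of_isLimit' w
    have key : ∀ s : Limits.PullbackCone (AddCommMonCat.ofHom (0 : PUnit →+ ℤ))
        (AddCommMonCat.ofHom M7.gamma),
        ∀ x : s.pt, M7.gamma (s.snd.hom x) = 0 := by
      intro s x
      have := ConcreteCategory.congr_hom s.condition x
      exact this.symm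
    apply Limits.PullbackCone.IsLimit.mk w.w
      (fun s => AddCommMonCat.ofHom (M7.lift s.snd.hom (key s)))
    · intro s
      ext x
    · intro s
      ext x
      exact M7.e_lift s.snd.hom (key s) x
    · intro s m hfst hsnd
      ext x
      exact M7.lift_unique s.snd.hom (key s) m.hom
        (fun y => ConcreteCategory.congr_hom hsnd y) x
  · intro g hg
    have h1 : g 1 + g 1 = 0 := by
      rw [← map_add]
      have : (1 + 1 : ZMod 2) = 0 := by decide
      rw [this, map_zero]
    have h2 : g 1 = 0 := by omega
    have := hg (a₁ := 1) (a₂ := 0) (by simp [h2])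
    exact one_ne_zero this
  · intro g h
    have hg : g = 0 := by
      have hw := h.w.symm
      simp at hw
      rw [hw]
      ext x
      simp
    have heq : (𝟙 (AddCommGrpCat.of (ZMod 2))) = (AddCommGrpCat.ofHom (0 : ZMod 2 →+ ZMod 2)) := by
      apply h.hom_ext
      · ext x
      · rw [hg]
        ext x
        simp [AddCommGrpCat.ofHom]
    have := ConcreteCategory.congr_hom heq (1 : ZMod 2)
    have h1 : (1 : ZMod 2) = 0 := this
    exact one_ne_zero h1
end
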